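/- arXiv:2409.01303 — 2 statements merged into one kernel-verified Lean document; each statement's English description precedes it below -/
import Mathlib

section
/- Set ε := √3·sin(π/8) and define Φ_sph : ℝ² → ℝ³ by Φ_sph(θ, φ) = (sin φ cos θ, sin φ sin θ, cos φ). Let S be a subset of the unit sphere S² ⊂ ℝ³ whose Euclidean diameter is strictly less than ε. Then there exists θ₀ ∈ ℝ such that S is disjoint from the band {Φ_sph(θ, φ) : θ₀ ≤ θ ≤ θ₀ + 2π/3, π/8 ≤ φ ≤ 7π/8}. -/
open Real

/-- The spherical coordinate map `Φ_sph(θ, φ) = (sin φ cos θ, sin φ sin θ, cos φ)`. -/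
noncomputable def sphCoord (θ φ : ℝ) : EuclideanSpace ℝ (Fin 3) :=
  WithLp.toLp 2 ![Real.sin φ * Real.cos θ, Real.sin φ * Real.sin θ, Real.cos φ]

lemma sin_ge_of_mem (φ : ℝ) (h1 : π / 8 ≤ φ) (h2 : φ ≤ 7 * π / 8) :
    Real.sin (π / 8) ≤ Real.sin φ := by
  have hpi := Real.pi_pos
  have : Real.sin φ = Real.cos (π / 2 - φ) := (Real.cos_pi_div_two_sub φ).symm
  rw [this, ← Real.cos_abs (π / 2 - φ)]
  have hle : |π / 2 - φ| ≤ 3 * π / 8 := by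
    rw [abs_le]; constructor <;> linarith
  have : Real.sin (π / 8) = Real.cos (3 * π / 8) := by
    rw [← Real.cos_pi_div_two_sub]; ring_nf
  rw [this]
  exact Real.cos_le_cos_of_nonneg_of_le_pi (abs_nonneg _) (by linarith) hle

lemma abs_cos_le_of_mem (φ : ℝ) (h1 : π / 8 ≤ φ) (h2 : φ ≤ 7 * π / 8) :
    |Real.cos φ| ≤ Real.cos (π / 8) := by
  have hpi := Real.pi_pos
  rw [abs_le]
  constructor
  · have : Real.cos φ ≥ Real.cos (7 * π / 8) :=
      Real.cos_le_cos_of_nonneg_of_le_pi (by linarith) (by linarith) h2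
    have h78 : Real.cos (7 * π / 8) = -Real.cos (π / 8) := by
      rw [show (7 : ℝ) * π / 8 = π - π / 8 by ring, Real.cos_pi_sub]
    linarith
  · exact Real.cos_le_cos_of_nonneg_of_le_pi (by linarith) (by linarith) h1

lemma cos_le_neg_half (x : ℝ) (h1 : 2 * π / 3 ≤ x) (h2 : x ≤ 4 * π / 3) :
    Real.cos x ≤ -(1 / 2) := by
  have hpi := Real.pi_pos
  have hx : Real.cos x = -Real.cos (x - π) := by
    rw [show x - π = -(π - x) by ring, Real.cos_neg, Real.cos_pi_sub]; ring
  rw [hx, ← Real.cos_abs (x - π)]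
  have hle : |x - π| ≤ π / 3 := by rw [abs_le]; constructor <;> linarith
  have : Real.cos (π / 3) ≤ Real.cos |x - π| :=
    Real.cos_le_cos_of_nonneg_of_le_pi (abs_nonneg _) (by linarith) hle
  rw [Real.cos_pi_div_three] at this
  linarith

lemma dist_sph_ge (θ₁ φ₁ θ₂ φ₂ : ℝ)
    (hc : Real.cos (θ₂ - θ₁) ≤ -(1 / 2))
    (h11 : π / 8 ≤ φ₁) (h12 : φ₁ ≤ 7 * π / 8)
    (h21 : π / 8 ≤ φ₂) (h22 : φ₂ ≤ 7 * π / 8) :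
    Real.sqrt 3 * Real.sin (π / 8) ≤ dist (sphCoord θ₁ φ₁) (sphCoord θ₂ φ₂) := by
  have hs8 : 0 < Real.sin (π / 8) := Real.sin_pos_of_pos_of_lt_pi
    (by positivity) (by have := Real.pi_pos; linarith)
  have hs1 := sin_ge_of_mem φ₁ h11 h12
  have hs2 := sin_ge_of_mem φ₂ h21 h22
  have hc1 := abs_cos_le_of_mem φ₁ h11 h12
  have hc2 := abs_cos_le_of_mem φ₂ h21 h22
  have key : 3 * Real.sin (π / 8) ^ 2 ≤
      ∑ i, (sphCoord θ₁ φ₁ i - sphCoord θ₂ φ₂ i) ^ 2 := by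
    simp only [sphCoord, PiLp.toLp_apply, Fin.sum_univ_three, Matrix.cons_val_zero, Matrix.cons_val_one,
      Matrix.head_cons, Matrix.cons_val_two, Matrix.tail_cons]
    have hexp : (Real.sin φ₁ * Real.cos θ₁ - Real.sin φ₂ * Real.cos θ₂) ^ 2 +
        (Real.sin φ₁ * Real.sin θ₁ - Real.sin φ₂ * Real.sin θ₂) ^ 2 +
        (Real.cos φ₁ - Real.cos φ₂) ^ 2 =
        2 - 2 * (Real.sin φ₁ * Real.sin φ₂) * Real.cos (θ₂ - θ₁)
          - 2 * Real.cos φ₁ * Real.cos φ₂ := by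
      have e1 := Real.sin_sq_add_cos_sq θ₁
      have e2 := Real.sin_sq_add_cos_sq θ₂
      have e3 := Real.sin_sq_add_cos_sq φ₁
      have e4 := Real.sin_sq_add_cos_sq φ₂
      rw [Real.cos_sub]
      linear_combination (Real.sin φ₁ ^ 2) * e1 + (Real.sin φ₂ ^ 2) * e2 + e3 + e4
    rw [hexp]
    have hss : Real.sin (π / 8) ^ 2 ≤ Real.sin φ₁ * Real.sin φ₂ := by
      nlinarith
    have hcc : Real.cos φ₁ * Real.cos φ₂ ≤ Real.cos (π / 8) ^ 2 := by
      calc Real.cos φ₁ * Real.cos φ₂ ≤ |Real.cos φ₁| * |Real.cos φ₂| := by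
            rw [← abs_mul]; exact le_abs_self _
        _ ≤ Real.cos (π / 8) ^ 2 := by
            have h0 : (0:ℝ) ≤ Real.cos (π / 8) := Real.cos_nonneg_of_mem_Icc
              ⟨by have := Real.pi_pos; linarith, by have := Real.pi_pos; linarith⟩
            nlinarith [abs_nonneg (Real.cos φ₁), abs_nonneg (Real.cos φ₂)]
    have hsc : Real.sin (π / 8) ^ 2 + Real.cos (π / 8) ^ 2 = 1 :=
      Real.sin_sq_add_cos_sq _
    nlinarith [hss, hcc]
  have hdist : dist (sphCoord θ₁ φ₁) (sphCoord θ₂ φ₂) =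
      Real.sqrt (∑ i, (sphCoord θ₁ φ₁ i - sphCoord θ₂ φ₂ i) ^ 2) := by
    rw [EuclideanSpace.dist_eq]
    congr 1
    apply Finset.sum_congr rfl
    intro i _
    rw [Real.dist_eq, sq_abs]
  rw [hdist]
  have h3 : Real.sqrt 3 * Real.sin (π / 8) =
      Real.sqrt (3 * Real.sin (π / 8) ^ 2) := by
    rw [Real.sqrt_mul (by norm_num), Real.sqrt_sq hs8.le]
  rw [h3]
  exact Real.sqrt_le_sqrt key

/-- Any subset of the unit sphere of Euclidean diameter `< √3 sin(π/8)` avoids some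
"timezone" band `{Φ_sph(θ, φ) : θ₀ ≤ θ ≤ θ₀ + 2π/3, π/8 ≤ φ ≤ 7π/8}`. -/
theorem exists_band_disjoint (S : Set (EuclideanSpace ℝ (Fin 3)))
    (hS : S ⊆ Metric.sphere (0 : EuclideanSpace ℝ (Fin 3)) 1)
    (hdiam : Metric.diam S < Real.sqrt 3 * Real.sin (π / 8)) :
    ∃ θ₀ : ℝ, ∀ θ φ : ℝ, θ₀ ≤ θ → θ ≤ θ₀ + 2 * π / 3 →
      π / 8 ≤ φ → φ ≤ 7 * π / 8 → sphCoord θ φ ∉ S := by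
  by_contra h
  push_neg at h
  obtain ⟨θ₁, φ₁, h10, h1u, h11, h12, hm1⟩ := h 0
  obtain ⟨θ₂, φ₂, h20, h2u, h21, h22, hm2⟩ := h (θ₁ + 2 * π / 3)
  have hc : Real.cos (θ₂ - θ₁) ≤ -(1 / 2) :=
    cos_le_neg_half _ (by linarith) (by linarith)
  have hge := dist_sph_ge θ₁ φ₁ θ₂ φ₂ hc h11 h12 h21 h22
  have hbdd : Bornology.IsBounded S :=
    (Metric.isBounded_sphere).subset hS
  have hle := Metric.dist_le_diam_of_mem hbdd hm1 hm2
  linarith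
end

section
/- Fix an integer n ≥ 3 and let V_n ⊂ S² be the finite set consisting of the north pole (0,0,1), the south pole (0,0,−1), and the points Φ_sph(2πi/n, (j+1)π/(n+1)) for i = 0, …, n−1 and j = 0, …, n−1. Then for every x ∈ S² there exists v ∈ V_n with Euclidean distance ‖x − v‖ ≤ 2π/n. -/
open Real

lemma sin_sq_le_sq' (x : ℝ) : Real.sin x ^ 2 ≤ x ^ 2 := by
  have h : ∀ y : ℝ, 0 ≤ y → Real.sin y ^ 2 ≤ y ^ 2 := by
    intro y hy
    have h1 := Real.sin_le hy
    rcases le_or_gt 1 y with h2 | h2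
    · nlinarith [Real.neg_one_le_sin y]
    · have h3 := Real.sin_nonneg_of_nonneg_of_le_pi hy (by nlinarith [Real.pi_gt_three])
      nlinarith
  rcases le_or_gt 0 x with hx | hx
  · exact h x hx
  · have := h (-x) (by linarith)
    rw [Real.sin_neg] at this; nlinarith

lemma two_sin_sq_half (x : ℝ) : 2 * Real.sin (x / 2) ^ 2 = 1 - Real.cos x := by
  have h := Real.cos_two_mul (x / 2)
  have p := Real.sin_sq_add_cos_sq (x / 2)
  have : 2 * (x / 2) = x := by ring
  rw [this] at h
  linarith

lemma dist_sphCoord_sq (θ φ θ' φ' : ℝ) :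
    dist (sphCoord θ φ) (sphCoord θ' φ') ^ 2 =
      4 * Real.sin ((φ - φ') / 2) ^ 2 +
        4 * Real.sin φ * Real.sin φ' * Real.sin ((θ - θ') / 2) ^ 2 := by
  have hd : dist (sphCoord θ φ) (sphCoord θ' φ') ^ 2
      = ∑ i, (sphCoord θ φ i - sphCoord θ' φ' i) ^ 2 := by
    rw [EuclideanSpace.dist_eq, Real.sq_sqrt (by positivity)]
    simp only [Real.dist_eq, sq_abs]
  rw [hd, Fin.sum_univ_three]
  have h1 : 2 * Real.sin ((φ - φ') / 2) ^ 2 = 1 - Real.cos (φ - φ') := two_sin_sq_half _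
  have h2 : 2 * Real.sin ((θ - θ') / 2) ^ 2 = 1 - Real.cos (θ - θ') := two_sin_sq_half _
  rw [Real.cos_sub] at h1 h2
  have p1 := Real.sin_sq_add_cos_sq θ
  have p2 := Real.sin_sq_add_cos_sq θ'
  have p3 := Real.sin_sq_add_cos_sq φ
  have p4 := Real.sin_sq_add_cos_sq φ'
  simp only [sphCoord, WithLp.ofLp_toLp, Matrix.cons_val_zero, Matrix.cons_val_one, Matrix.head_cons,
    Matrix.cons_val_two, Matrix.tail_cons]
  nlinarith [sq_nonneg (Real.sin φ * Real.sin φ')]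

/-- The vertex set `V_n` of the triangulation `T(n)` of the unit sphere: the two poles
together with the grid points `Φ_sph(2πi/n, (j+1)π/(n+1))`, `0 ≤ i, j ≤ n−1`. -/
noncomputable def vertexSet (n : ℕ) : Set (EuclideanSpace ℝ (Fin 3)) :=
  {(WithLp.toLp 2 ![0, 0, 1] : EuclideanSpace ℝ (Fin 3)), (WithLp.toLp 2 ![0, 0, -1] : EuclideanSpace ℝ (Fin 3))} ∪
    {p | ∃ i < n, ∃ j < n, p = sphCoord (2 * π * i / n) ((j + 1) * π / (n + 1))}

set_option maxHeartbeats 1000000 in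
/-- Every point of the unit sphere lies within Euclidean distance `2π/n` of some vertex of
the triangulation `T(n)`. -/
theorem exists_vertex_close (n : ℕ) (hn : 3 ≤ n)
    (x : EuclideanSpace ℝ (Fin 3)) (hx : x ∈ Metric.sphere (0 : EuclideanSpace ℝ (Fin 3)) 1) :
    ∃ v ∈ vertexSet n, dist x v ≤ 2 * π / n := by
  have hπ := Real.pi_pos
  have hn3 : (3:ℝ) ≤ (n:ℝ) := by exact_mod_cast hn
  have hnR : (0:ℝ) < (n:ℝ) := by linarith
  -- the coordinates of x
  have hnorm : ‖x‖ = 1 := by simpa using hx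
  have hsum : x 0 ^ 2 + x 1 ^ 2 + x 2 ^ 2 = 1 := by
    have h1 : ‖x‖ ^ 2 = 1 := by rw [hnorm]; norm_num
    rw [EuclideanSpace.norm_eq, Real.sq_sqrt (by positivity)] at h1
    rw [Fin.sum_univ_three] at h1
    simpa [Real.norm_eq_abs, sq_abs] using h1
  set φ := Real.arccos (x 2) with hφdef
  have hφ0 : 0 ≤ φ := Real.arccos_nonneg _
  have hφπ : φ ≤ π := Real.arccos_le_pi _
  have hcos : Real.cos φ = x 2 := Real.cos_arccos (by nlinarith) (by nlinarith)
  have hsin : Real.sin φ = Real.sqrt (x 0 ^ 2 + x 1 ^ 2) := by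
    rw [hφdef, Real.sin_arccos]
    congr 1; nlinarith
  have hsinφ0 : 0 ≤ Real.sin φ := Real.sin_nonneg_of_nonneg_of_le_pi hφ0 hφπ
  have hsinφ1 : Real.sin φ ≤ 1 := Real.sin_le_one _
  set z : ℂ := ⟨x 0, x 1⟩ with hzdef
  set θ := Complex.arg z with hθdef
  have habs : (‖z‖ : ℝ) = Real.sin φ := by
    rw [hsin, Complex.norm_def, Complex.normSq_apply]
    norm_num [hzdef]; ring_nf
  have hz := Complex.norm_mul_cos_add_sin_mul_I z
  rw [← Complex.ofReal_cos, ← Complex.ofReal_sin, Complex.ext_iff] at hz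
  obtain ⟨h1, h2⟩ := hz
  simp only [Complex.add_re, Complex.add_im, Complex.mul_re, Complex.mul_im, Complex.ofReal_re, Complex.ofReal_im, Complex.I_re, Complex.I_im] at h1 h2
  ring_nf at h1 h2
  have hx0 : x 0 = Real.sin φ * Real.cos θ := by
    rw [← habs]; exact h1.symm
  have hx1 : x 1 = Real.sin φ * Real.sin θ := by
    rw [← habs]; exact h2.symm
  have hxeq : x = sphCoord θ φ := by
    ext i
    fin_cases i
    · simpa [sphCoord] using hx0
    · simpa [sphCoord] using hx1
    · simpa [sphCoord] using hcos.symm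
  -- polar grid index
  set k : ℤ := round (φ * (n + 1) / π) with hkdef
  have hkb := abs_sub_round (φ * (n + 1) / π)
  rw [← hkdef, abs_le] at hkb
  have hcancel : φ * (n + 1) / π * π = φ * (n + 1) := div_mul_cancel₀ _ hπ.ne'
  have hφk1 : -(π/2) ≤ φ * (n+1) - k * π := by
    have e1 := mul_le_mul_of_nonneg_right hkb.1 hπ.le
    rw [sub_mul, hcancel] at e1
    linarith
  have hφk2 : φ * (n+1) - k * π ≤ π/2 := by
    have e1 := mul_le_mul_of_nonneg_right hkb.2 hπ.le
    rw [sub_mul, hcancel] at e1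
    linarith
  have hk0 : 0 ≤ k := by
    have h1 : (-1 : ℝ) < (k : ℝ) := by
      nlinarith [hφk1, hπ, mul_nonneg hφ0 (by linarith : (0:ℝ) ≤ (n:ℝ)+1)]
    have h2 : (-1 : ℤ) < k := by exact_mod_cast h1
    omega
  have hkn : k ≤ (n : ℤ) + 1 := by
    have h1 : (k : ℝ) < (n : ℝ) + 2 := by
      nlinarith [hφk2, hπ, mul_le_mul_of_nonneg_right hφπ (by linarith : (0:ℝ) ≤ (n:ℝ)+1)]
    have h2 : (k : ℤ) < (n : ℤ) + 2 := by exact_mod_cast h1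
    omega
  have hgoal : ∀ v : EuclideanSpace ℝ (Fin 3),
      dist x v ^ 2 ≤ (2 * π / n) ^ 2 → dist x v ≤ 2 * π / n := by
    intro v hv
    nlinarith [dist_nonneg (x := x) (y := v), div_nonneg (by positivity : (0:ℝ) ≤ 2 * π) hnR.le]
  have hNP : (WithLp.toLp 2 ![0, 0, 1] : EuclideanSpace ℝ (Fin 3)) = sphCoord 0 0 := by
    ext i; fin_cases i <;> simp [sphCoord]
  have hSP : (WithLp.toLp 2 ![0, 0, -1] : EuclideanSpace ℝ (Fin 3)) = sphCoord 0 π := by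
    ext i; fin_cases i <;> simp [sphCoord]
  rcases show k = 0 ∨ k = (n:ℤ) + 1 ∨ (1 ≤ k ∧ k ≤ (n:ℤ)) by omega with hc | hc | hc
  · -- north pole
    refine ⟨WithLp.toLp 2 ![0, 0, 1], by simp [vertexSet], hgoal _ ?_⟩
    rw [hxeq, hNP, dist_sphCoord_sq]
    have hφs : φ * (n+1) ≤ π/2 := by rw [hc] at hφk2; push_cast at hφk2; linarith
    have hs := sin_sq_le_sq' ((φ - 0)/2)
    rw [div_pow, le_div_iff₀ (by positivity : (0:ℝ) < (n:ℝ)^2)]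
    simp only [Real.sin_zero]
    have hq : (φ * ((n:ℝ)+1))^2 ≤ π^2/4 := by
      nlinarith [mul_nonneg hφ0 (by linarith : (0:ℝ) ≤ (n:ℝ)+1)]
    have hmn : φ^2 * (n:ℝ)^2 ≤ (φ*((n:ℝ)+1))^2 := by nlinarith [sq_nonneg φ]
    have hsn := mul_le_mul_of_nonneg_right hs (sq_nonneg (n:ℝ))
    linarith [hq, hmn, hsn, sq_nonneg π]
  · -- south pole
    refine ⟨WithLp.toLp 2 ![0, 0, -1], by simp [vertexSet], hgoal _ ?_⟩
    rw [hxeq, hSP, dist_sphCoord_sq]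
    have hφs : (π - φ) * (n+1) ≤ π/2 := by rw [hc] at hφk1; push_cast at hφk1; nlinarith
    have hφs0 : 0 ≤ π - φ := by linarith
    have hs := sin_sq_le_sq' ((φ - π)/2)
    rw [div_pow, le_div_iff₀ (by positivity : (0:ℝ) < (n:ℝ)^2)]
    simp only [Real.sin_pi]
    have hq : ((π-φ) * ((n:ℝ)+1))^2 ≤ π^2/4 := by
      nlinarith [mul_nonneg hφs0 (by linarith : (0:ℝ) ≤ (n:ℝ)+1)]
    have hmn : (π-φ)^2 * (n:ℝ)^2 ≤ ((π-φ)*((n:ℝ)+1))^2 := by nlinarith [sq_nonneg (π-φ)]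
    have hsn := mul_le_mul_of_nonneg_right hs (sq_nonneg (n:ℝ))
    linarith [hq, hmn, hsn, sq_nonneg π]
  · -- middle band
    obtain ⟨hk1, hk2⟩ := hc
    -- azimuth index
    set i0 : ℤ := round (θ * n / (2 * π)) with hi0def
    have hib := abs_sub_round (θ * n / (2 * π))
    rw [← hi0def, abs_le] at hib
    have hcancel2 : θ * n / (2 * π) * (2 * π) = θ * n := div_mul_cancel₀ _ (by positivity)
    have hθ1 : -π ≤ θ * n - i0 * (2 * π) := by
      have e1 := mul_le_mul_of_nonneg_right hib.1 (by positivity : (0:ℝ) ≤ 2 * π)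
      rw [sub_mul, hcancel2] at e1
      linarith
    have hθ2 : θ * n - i0 * (2 * π) ≤ π := by
      have e1 := mul_le_mul_of_nonneg_right hib.2 (by positivity : (0:ℝ) ≤ 2 * π)
      rw [sub_mul, hcancel2] at e1
      linarith
    have hnz : (n : ℤ) ≠ 0 := by omega
    set i : ℕ := (i0 % n).toNat with hidef
    have hicast : (i : ℤ) = i0 % n := Int.toNat_of_nonneg (Int.emod_nonneg _ hnz)
    have hin : i < n := by
      have := Int.emod_lt_of_pos i0 (by omega : (0:ℤ) < (n:ℤ))
      omega
    set q : ℤ := i0 / n with hqdef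
    have hiq : (i : ℤ) = i0 - n * q := by
      rw [hicast, hqdef]; linarith [Int.emod_add_mul_ediv i0 (n:ℤ)]
    set j : ℕ := (k - 1).toNat with hjdef
    have hjcast : (j : ℤ) = k - 1 := Int.toNat_of_nonneg (by omega)
    have hjn : j < n := by omega
    refine ⟨sphCoord (2 * π * i / n) ((j + 1) * π / (n + 1)),
      Or.inr ⟨i, hin, j, hjn, rfl⟩, hgoal _ ?_⟩
    rw [hxeq, dist_sphCoord_sq]
    have hjr : ((j : ℝ) + 1) = (k : ℝ) := by
      have : ((j : ℤ) + 1 : ℤ) = k := by omega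
      exact_mod_cast this
    set ψ : ℝ := ((j : ℝ) + 1) * π / (n + 1) with hψdef
    have hψπ : ψ = (k : ℝ) * π / (n + 1) := by rw [hψdef, hjr]
    have hψ0 : 0 ≤ ψ := by
      rw [hψπ]
      have : (1:ℝ) ≤ (k:ℝ) := by exact_mod_cast hk1
      positivity
    have hψle : ψ ≤ π := by
      rw [hψπ, div_le_iff₀ (by positivity : (0:ℝ) < (n:ℝ)+1)]
      have hkr : (k:ℝ) ≤ (n:ℝ) := by exact_mod_cast hk2
      linarith [mul_le_mul_of_nonneg_right hkr hπ.le]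
    have hsψ0 : 0 ≤ Real.sin ψ := Real.sin_nonneg_of_nonneg_of_le_pi hψ0 hψle
    have hsψ1 : Real.sin ψ ≤ 1 := Real.sin_le_one _
    -- the φ part
    have hn1 : ((n:ℝ) + 1) ≠ 0 := by positivity
    have hu : (φ - ψ) * ((n:ℝ) + 1) = φ * (n+1) - k * π := by
      rw [hψπ, sub_mul, div_mul_cancel₀ _ hn1]
    have hu2 : 4 * ((φ - ψ) * ((n:ℝ)+1))^2 ≤ π^2 := by
      rw [hu]; linarith [sq_le_sq' hφk1 hφk2]
    -- the θ part
    have hαshift : (θ - 2 * π * i / n) / 2 = (θ - 2 * π * i0 / n) / 2 + q * π := by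
      have : (i : ℝ) = (i0 : ℝ) - (n : ℝ) * (q : ℝ) := by exact_mod_cast hiq
      rw [this]; field_simp; ring
    have hsin_shift : Real.sin ((θ - 2 * π * i / n) / 2) ^ 2
        = Real.sin ((θ - 2 * π * i0 / n) / 2) ^ 2 := by
      rw [hαshift, Real.sin_add, Real.sin_int_mul_pi, mul_zero, add_zero, mul_pow]
      have hc2 : Real.cos ((q:ℝ) * π) ^ 2 = 1 := by
        have hp := Real.sin_sq_add_cos_sq ((q:ℝ) * π)
        rw [Real.sin_int_mul_pi] at hp; linarith [hp]
      rw [hc2, mul_one]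
    have hw : (θ - 2 * π * i0 / n) * (n : ℝ) = θ * n - i0 * (2 * π) := by
      field_simp
    have hw2 : ((θ - 2 * π * i0 / n) * (n:ℝ))^2 ≤ π^2 := by
      rw [hw]; exact sq_le_sq' hθ1 hθ2
    have hs1 := sin_sq_le_sq' ((φ - ψ)/2)
    have hs2 := sin_sq_le_sq' ((θ - 2 * π * i0 / n)/2)
    rw [hsin_shift, div_pow, le_div_iff₀ (by positivity : (0:ℝ) < (n:ℝ)^2)]
    have hmn2 : (φ-ψ)^2 * (n:ℝ)^2 ≤ ((φ-ψ)*((n:ℝ)+1))^2 := by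
      have he : ((φ-ψ)*((n:ℝ)+1))^2 - (φ-ψ)^2*(n:ℝ)^2 = (φ-ψ)^2 * (2*(n:ℝ)+1) := by ring
      have h2 : (0:ℝ) ≤ (φ-ψ)^2 * (2*(n:ℝ)+1) := by positivity
      linarith
    have hA : 4 * Real.sin ((φ - ψ)/2)^2 * (n:ℝ)^2 ≤ π^2 := by
      linarith [mul_le_mul_of_nonneg_right hs1 (sq_nonneg (n:ℝ)), hu2, hmn2, sq_nonneg π]
    have hB : 4 * Real.sin ((θ - 2 * π * i0 / n)/2)^2 * (n:ℝ)^2 ≤ π^2 := by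
      linarith [mul_le_mul_of_nonneg_right hs2 (sq_nonneg (n:ℝ)), hw2]
    have hD : Real.sin φ * Real.sin ψ ≤ 1 := mul_le_one₀ hsinφ1 hsψ0 hsψ1
    have hBnn : (0:ℝ) ≤ 4 * Real.sin ((θ - 2 * π * i0 / n)/2)^2 * (n:ℝ)^2 := by positivity
    have hE := mul_le_of_le_one_left hBnn hD
    linarith [hA, hB, hE, sq_nonneg π]
end
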